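/- Constraints from general loss bounds on the ensemble (Theorem 4.1): suppose ε₁,…,ε_p ∈ ℝ and define b_i^ℓ = (1/n)·Σ_{j=1}^n [ℓ₊(h_i(x_j)) + ℓ₋(h_i(x_j))] − 2ε_i for each i. With the feasible set Z^ℓ = {z ∈ [−1,1]ⁿ : ℓ(z, h_i) ≤ ε_i for all i ∈ [p]} assumed nonempty, the minimax value satisfies: min over g ∈ [−1,1]ⁿ of sup over z ∈ Z^ℓ of ℓ(z,g) = (1/2)·inf over σ ∈ ℝᵖ with σ ≥ 0 of [−Σ_{i=1}^p b_i^ℓ·σ_i + (1/n)·Σ_{j=1}^n Ψ(Σ_{i=1}^p σ_i·Γ(h_i(x_j)))]. -/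

import Mathlib

open scoped BigOperators

noncomputable def Psi (lp lm Γinv : ℝ → ℝ) (m : ℝ) : ℝ :=
  if m ≤ lm (-1) - lp (-1) then -m + 2 * lm (-1)
  else if m < lm 1 - lp 1 then lp (Γinv m) + lm (Γinv m)
  else m + 2 * lp 1

noncomputable def lossV (lp lm : ℝ → ℝ) (n : ℕ) (z g : Fin n → ℝ) : ℝ :=
  (1 / (n : ℝ)) * ∑ j, ((1 + z j) / 2 * lp (g j) + (1 - z j) / 2 * lm (g j))

open Set Finset

/-- Strong LP duality under a Slater condition, for box-constrained LPs. -/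
lemma slater_dual (p n : ℕ) (a : Fin p → Fin n → ℝ) (b : Fin p → ℝ) (c : Fin n → ℝ) (v : ℝ)
    (z₀ : Fin n → ℝ) (hz₀ : ∀ j, z₀ j ∈ Set.Icc (-1:ℝ) 1)
    (hslater : ∀ i, b i < ∑ j, a i j * z₀ j)
    (hub : ∀ z : Fin n → ℝ, (∀ j, z j ∈ Set.Icc (-1:ℝ) 1) → (∀ i, b i ≤ ∑ j, a i j * z j) →
      ∑ j, c j * z j ≤ v) :
    ∃ σ : Fin p → ℝ, (∀ i, 0 ≤ σ i) ∧ ∀ z : Fin n → ℝ, (∀ j, z j ∈ Set.Icc (-1:ℝ) 1) →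
      ∑ j, c j * z j + ∑ i, σ i * ((∑ j, a i j * z j) - b i) ≤ v := by
  classical
  set φ : (Fin n → ℝ) → ((Fin p → ℝ) × ℝ) := fun z => (fun i => (∑ j, a i j * z j) - b i, (∑ j, c j * z j) - v)
    with hφ
  set C : Set ((Fin p → ℝ) × ℝ) := {w | ∃ z : Fin n → ℝ, (∀ j, z j ∈ Set.Icc (-1:ℝ) 1) ∧ w = φ z} with hC
  set Q : Set ((Fin p → ℝ) × ℝ) := (Set.univ.pi fun _ : Fin p => Set.Ioi (0:ℝ)) ×ˢ Set.Ioi (0:ℝ) with hQ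
  have hQmem : ∀ w : (Fin p → ℝ) × ℝ, w ∈ Q ↔ (∀ i, 0 < w.1 i) ∧ 0 < w.2 := by
    intro w
    rw [hQ, Set.mem_prod, Set.mem_univ_pi]
    simp only [Set.mem_Ioi]
  have hQopen : IsOpen Q := (isOpen_set_pi Set.finite_univ (fun _ _ => isOpen_Ioi)).prod isOpen_Ioi
  have hQconv : Convex ℝ Q := (convex_pi fun _ _ => convex_Ioi 0).prod (convex_Ioi 0)
  have hCconv : Convex ℝ C := by
    rintro x ⟨z1, hz1, rfl⟩ y ⟨z2, hz2, rfl⟩ s t hs ht hst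
    refine ⟨fun j => s * z1 j + t * z2 j, fun j => ?_, ?_⟩
    · have := (convex_Icc (-1:ℝ) 1) (hz1 j) (hz2 j) hs ht hst
      simpa [smul_eq_mul] using this
    · have hsum : ∀ d : Fin n → ℝ, ∑ j, d j * (s * z1 j + t * z2 j)
          = s * (∑ j, d j * z1 j) + t * (∑ j, d j * z2 j) := by
        intro d
        rw [Finset.mul_sum, Finset.mul_sum, ← Finset.sum_add_distrib]
        exact Finset.sum_congr rfl fun j _ => by ring
      have h1 : (1:ℝ) = s + t := hst.symm
      refine Prod.ext ?_ ?_
      · funext i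
        have hL : ((s • φ z1 + t • φ z2).1) i
            = s * ((∑ j, a i j * z1 j) - b i) + t * ((∑ j, a i j * z2 j) - b i) := by
          simp [hφ, Prod.smul_fst, Prod.smul_snd, smul_eq_mul]
        have hR : ((φ fun j => s * z1 j + t * z2 j).1) i
            = (∑ j, a i j * (s * z1 j + t * z2 j)) - b i := by simp [hφ]
        rw [hL, hR, hsum (a i)]
        linear_combination (-(b i)) * hst
      · have hL : ((s • φ z1 + t • φ z2).2)
            = s * ((∑ j, c j * z1 j) - v) + t * ((∑ j, c j * z2 j) - v) := by
          simp [hφ, Prod.smul_fst, Prod.smul_snd, smul_eq_mul]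
        have hR : ((φ fun j => s * z1 j + t * z2 j).2)
            = (∑ j, c j * (s * z1 j + t * z2 j)) - v := by simp [hφ]
        rw [hL, hR, hsum c]
        linear_combination (-v) * hst
  have hdisj : Disjoint Q C := by
    rw [Set.disjoint_left]
    rintro w hwQ ⟨z, hz, rfl⟩
    rw [hQmem] at hwQ
    obtain ⟨h1, h2⟩ := hwQ
    have hfeas : ∀ i, b i ≤ ∑ j, a i j * z j := by
      intro i
      have := h1 i
      simp only [hφ] at this
      linarith
    have := hub z hz hfeas
    simp only [hφ] at h2
    linarith
  obtain ⟨f, u, hfQ, hfC⟩ := geometric_hahn_banach_open hQconv hQopen hCconv hdisj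
  -- the all-ones point of Q
  set w0 : (Fin p → ℝ) × ℝ := (fun _ => (1:ℝ), 1) with hw0
  have hw0Q : w0 ∈ Q := by rw [hQmem]; exact ⟨fun _ => one_pos, one_pos⟩
  have hfw0 : f w0 < u := hfQ w0 hw0Q
  -- nonnegative vectors get nonpositive f-value
  have hneg : ∀ w : (Fin p → ℝ) × ℝ, (∀ i, 0 ≤ w.1 i) → 0 ≤ w.2 → f w ≤ 0 := by
    intro w hw1 hw2
    by_contra h
    push_neg at h
    set t : ℝ := (u - f w0 + 1) / f w with htdef
    have htpos : 0 < t := div_pos (by linarith) h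
    have hmem : t • w + w0 ∈ Q := by
      rw [hQmem]
      constructor
      · intro i
        have : (t • w + w0).1 i = t * w.1 i + 1 := by
          simp [hw0, Prod.smul_fst, smul_eq_mul]
        rw [this]; nlinarith [hw1 i]
      · have : (t • w + w0).2 = t * w.2 + 1 := by
          simp [hw0, Prod.smul_snd, smul_eq_mul]
        rw [this]; nlinarith
    have := hfQ _ hmem
    rw [map_add, map_smul] at this
    have htfw : t * f w = u - f w0 + 1 := by
      rw [htdef, div_mul_cancel₀ _ (ne_of_gt h)]
    simp only [smul_eq_mul] at this
    linarith
  -- coefficients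
  set σt : Fin p → ℝ := fun i => -f (Pi.single i 1, 0) with hσt
  set τ : ℝ := -f (0, 1) with hτ
  have hσtnn : ∀ i, 0 ≤ σt i := by
    intro i
    have := hneg (Pi.single i 1, 0) (fun k => by
      by_cases h : k = i
      · subst h; simp
      · simp [Pi.single_apply, h]) le_rfl
    simp [hσt]; linarith
  have hτnn : 0 ≤ τ := by
    have := hneg (0, 1) (fun k => le_rfl) zero_le_one
    simp [hτ]; linarith
  -- representation of f
  have hrep : ∀ w : (Fin p → ℝ) × ℝ, f w = -(∑ i, σt i * w.1 i) - τ * w.2 := by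
    intro w
    have hw : w = (∑ i, w.1 i • ((Pi.single i 1, 0) : (Fin p → ℝ) × ℝ)) + w.2 • ((0,1) : (Fin p → ℝ) × ℝ) := by
      refine Prod.ext ?_ ?_
      · have h2 : ((w.2 • ((0,1):(Fin p → ℝ) × ℝ)).1 : Fin p → ℝ) = 0 := by simp
        have h1 : ((∑ i, w.1 i • ((Pi.single i 1, 0) : (Fin p → ℝ) × ℝ)).1 : Fin p → ℝ)
            = ∑ i, Pi.single i (w.1 i) := by
          rw [Prod.fst_sum]
          refine Finset.sum_congr rfl fun i _ => ?_
          have : (w.1 i • ((Pi.single i 1, 0) : (Fin p → ℝ) × ℝ)).1 = w.1 i • (Pi.single i 1 : Fin p → ℝ) := rfl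
          rw [this, ← Pi.single_smul, smul_eq_mul, mul_one]
        rw [Prod.fst_add, h1, h2, add_zero, Finset.univ_sum_single]
      · have h1 : ((∑ i, w.1 i • ((Pi.single i 1, 0) : (Fin p → ℝ) × ℝ)).2 : ℝ) = 0 := by
          rw [Prod.snd_sum]
          simp
        have h2 : ((w.2 • ((0,1):(Fin p → ℝ) × ℝ)).2 : ℝ) = w.2 := by simp
        rw [Prod.snd_add, h1, h2, zero_add]
    conv_lhs => rw [hw]
    rw [map_add, map_sum, map_smul]
    have hterm : ∀ i, f (w.1 i • ((Pi.single i 1, 0) : (Fin p → ℝ) × ℝ)) = w.1 i * f ((Pi.single i 1, 0) : (Fin p → ℝ) × ℝ) := by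
      intro i; rw [map_smul]; rfl
    simp only [hterm, smul_eq_mul, hσt, hτ]
    have : ∑ i, w.1 i * f ((Pi.single i 1, 0) : (Fin p → ℝ) × ℝ) = -(∑ i, -f ((Pi.single i 1, 0) : (Fin p → ℝ) × ℝ) * w.1 i) := by
      rw [← Finset.sum_neg_distrib]
      exact Finset.sum_congr rfl fun i _ => by ring
    rw [this]
    ring
  -- 0 ≤ u
  have hu0 : 0 ≤ u := by
    by_contra h
    push_neg at h
    have hfw0neg : f w0 < 0 := lt_trans hfw0 h
    set t : ℝ := u / f w0 * (1/2) with htdef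
    have htpos : 0 < t := by
      have : 0 < u / f w0 := div_pos_of_neg_of_neg h hfw0neg
      positivity
    have hmem : t • w0 ∈ Q := by
      rw [hQmem]
      refine ⟨fun i => ?_, ?_⟩
      · have : (t • w0).1 i = t := by simp [hw0, Prod.smul_fst, smul_eq_mul]
        rw [this]; exact htpos
      · have : (t • w0).2 = t := by simp [hw0, Prod.smul_snd, smul_eq_mul]
        rw [this]; exact htpos
    have hlt := hfQ _ hmem
    rw [map_smul, smul_eq_mul] at hlt
    have : t * f w0 = u / 2 := by
      rw [htdef]
      field_simp [ne_of_lt hfw0neg]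
    rw [this] at hlt
    linarith
  -- main inequality on C
  have hmain : ∀ z : Fin n → ℝ, (∀ j, z j ∈ Set.Icc (-1:ℝ) 1) →
      (∑ i, σt i * ((∑ j, a i j * z j) - b i)) + τ * ((∑ j, c j * z j) - v) ≤ 0 := by
    intro z hz
    have hmem : φ z ∈ C := ⟨z, hz, rfl⟩
    have := hfC _ hmem
    rw [hrep] at this
    simp only [hφ] at this
    linarith
  -- τ cannot vanish
  have hτpos : 0 < τ := by
    rcases lt_or_eq_of_le hτnn with h | h
    · exact h
    · exfalso
      have hs0 := hmain z₀ hz₀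
      rw [← h, zero_mul, add_zero] at hs0
      have hterms : ∀ i ∈ Finset.univ, (0:ℝ) ≤ σt i * ((∑ j, a i j * z₀ j) - b i) :=
        fun i _ => mul_nonneg (hσtnn i) (by linarith [hslater i])
      have hzero : ∀ i ∈ Finset.univ, σt i * ((∑ j, a i j * z₀ j) - b i) = 0 :=
        (Finset.sum_eq_zero_iff_of_nonneg hterms).mp (le_antisymm hs0 (Finset.sum_nonneg hterms))
      have hσ0 : ∀ i, σt i = 0 := by
        intro i
        have := hzero i (Finset.mem_univ i)
        have hpos : 0 < (∑ j, a i j * z₀ j) - b i := by linarith [hslater i]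
        exact (mul_eq_zero.mp this).resolve_right (ne_of_gt hpos)
      have hfw0' : f w0 = 0 := by
        rw [hrep]
        simp [hw0, hσ0, ← h, hτ]
      have hCz : u ≤ f (φ z₀) := hfC _ ⟨z₀, hz₀, rfl⟩
      have : f (φ z₀) = 0 := by
        rw [hrep]
        simp only [hφ, hσ0, ← h]
        simp
      rw [this] at hCz
      rw [hfw0'] at hfw0
      linarith
  refine ⟨fun i => σt i / τ, fun i => div_nonneg (hσtnn i) hτnn, fun z hz => ?_⟩
  have hm := hmain z hz
  have hsum : ∑ i, σt i / τ * ((∑ j, a i j * z j) - b i)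
      = (∑ i, σt i * ((∑ j, a i j * z j) - b i)) / τ := by
    rw [Finset.sum_div]
    exact Finset.sum_congr rfl fun i _ => div_mul_eq_mul_div _ _ _
  rw [hsum]
  have h2 : (∑ i, σt i * ((∑ j, a i j * z j) - b i)) / τ ≤ v - ∑ j, c j * z j := by
    rw [div_le_iff₀ hτpos]
    nlinarith [hm]
  linarith

/-- Strong LP duality without Slater (up to η), for box-constrained LPs with nonempty
feasible set. -/
lemma lp_dual (p n : ℕ) (a : Fin p → Fin n → ℝ) (b : Fin p → ℝ) (c : Fin n → ℝ) (v : ℝ)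
    (z₀ : Fin n → ℝ) (hz₀ : ∀ j, z₀ j ∈ Set.Icc (-1:ℝ) 1)
    (hfeas : ∀ i, b i ≤ ∑ j, a i j * z₀ j)
    (hub : ∀ z : Fin n → ℝ, (∀ j, z j ∈ Set.Icc (-1:ℝ) 1) → (∀ i, b i ≤ ∑ j, a i j * z j) →
      ∑ j, c j * z j ≤ v)
    (η : ℝ) (hη : 0 < η) :
    ∃ σ : Fin p → ℝ, (∀ i, 0 ≤ σ i) ∧ ∀ z : Fin n → ℝ, (∀ j, z j ∈ Set.Icc (-1:ℝ) 1) →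
      ∑ j, c j * z j + ∑ i, σ i * ((∑ j, a i j * z j) - b i) ≤ v + η := by
  classical
  -- Step 1: find δ > 0 so that relaxing constraints by δ raises the value by at most η
  have hδ : ∃ δ : ℝ, 0 < δ ∧ ∀ z : Fin n → ℝ, (∀ j, z j ∈ Set.Icc (-1:ℝ) 1) →
      (∀ i, b i - δ ≤ ∑ j, a i j * z j) → ∑ j, c j * z j ≤ v + η := by
    by_contra h
    push_neg at h
    set T : ℕ → Set (Fin n → ℝ) := fun k =>
      {z | (∀ j, z j ∈ Set.Icc (-1:ℝ) 1) ∧ (∀ i, b i - 1/(k+1) ≤ ∑ j, a i j * z j) ∧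
        v + η ≤ ∑ j, c j * z j} with hT
    have hcont : ∀ d : Fin n → ℝ, Continuous fun z : Fin n → ℝ => ∑ j, d j * z j :=
      fun d => continuous_finset_sum _ fun j _ => continuous_const.mul (continuous_apply j)
    have hclosed : ∀ k, IsClosed (T k) := by
      intro k
      have h1 : IsClosed {z : Fin n → ℝ | ∀ j, z j ∈ Set.Icc (-1:ℝ) 1} := by
        have : {z : Fin n → ℝ | ∀ j, z j ∈ Set.Icc (-1:ℝ) 1}
            = Set.univ.pi fun _ => Set.Icc (-1:ℝ) 1 := by
          ext z; simp only [Set.mem_setOf_eq, Set.mem_univ_pi]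
        rw [this]
        exact isClosed_set_pi fun _ _ => isClosed_Icc
      have h2 : IsClosed {z : Fin n → ℝ | ∀ i, b i - 1/(k+1) ≤ ∑ j, a i j * z j} := by
        have : {z : Fin n → ℝ | ∀ i, b i - 1/(k+1) ≤ ∑ j, a i j * z j}
            = ⋂ i, {z | b i - 1/(k+1) ≤ ∑ j, a i j * z j} := by
          ext z; simp
        rw [this]
        exact isClosed_iInter fun i => isClosed_le continuous_const (hcont (a i))
      have h3 : IsClosed {z : Fin n → ℝ | v + η ≤ ∑ j, c j * z j} :=
        isClosed_le continuous_const (hcont c)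
      have : T k = _ ∩ (_ ∩ _) := rfl
      exact (h1.inter (h2.inter h3))
    have hsub : ∀ k, T (k+1) ⊆ T k := by
      intro k z hz
      obtain ⟨hz1, hz2, hz3⟩ := hz
      refine ⟨hz1, fun i => ?_, hz3⟩
      have : (1:ℝ)/(k+1+1) ≤ 1/(k+1) := by
        apply div_le_div_of_nonneg_left one_pos.le (by positivity)
        push_cast; linarith
      have := hz2 i
      push_cast at this ⊢
      linarith
    have hne' : ∀ k, (T k).Nonempty := by
      intro k
      obtain ⟨z, hz1, hz2, hz3⟩ := h (1/(k+1)) (by positivity)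
      exact ⟨z, hz1, hz2, le_of_lt hz3⟩
    have hcpt : IsCompact (T 0) := by
      refine IsCompact.of_isClosed_subset (isCompact_univ_pi fun _ : Fin n => (isCompact_Icc : IsCompact (Set.Icc (-1:ℝ) 1)))
        (hclosed 0) ?_
      intro z hz
      rw [Set.mem_univ_pi]
      exact fun j => hz.1 j
    obtain ⟨z, hz⟩ := IsCompact.nonempty_iInter_of_sequence_nonempty_isCompact_isClosed
      T hsub hne' hcpt hclosed
    simp only [Set.mem_iInter] at hz
    have hzbox := (hz 0).1
    have hzobj := (hz 0).2.2
    have hzfeas : ∀ i, b i ≤ ∑ j, a i j * z j := by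
      intro i
      have h' : ∀ ε : ℝ, 0 < ε → b i ≤ (∑ j, a i j * z j) + ε := by
        intro ε hε
        obtain ⟨k, hk⟩ := exists_nat_one_div_lt hε
        have := (hz k).2.1 i
        push_cast at this hk
        linarith
      exact le_of_forall_pos_le_add h'
    have := hub z hzbox hzfeas
    linarith
  obtain ⟨δ, hδpos, hδub⟩ := hδ
  obtain ⟨σ, hσnn, hσ⟩ := slater_dual p n a (fun i => b i - δ) c (v + η) z₀ hz₀
    (fun i => by simpa using lt_of_lt_of_le (by linarith : b i - δ < b i) (hfeas i)) hδub
  refine ⟨σ, hσnn, fun z hz => ?_⟩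
  have := hσ z hz
  have hmono : ∑ i, σ i * ((∑ j, a i j * z j) - b i)
      ≤ ∑ i, σ i * ((∑ j, a i j * z j) - (b i - δ)) := by
    apply Finset.sum_le_sum
    intro i _
    have := hσnn i
    nlinarith
  linarith


lemma psi_le (lp lm Γinv : ℝ → ℝ)
    (hlpm : AntitoneOn lp (Set.Icc (-1) 1))
    (hlmm : MonotoneOn lm (Set.Icc (-1) 1))
    (hGinvMem : ∀ m ∈ Set.Icc (lm (-1) - lp (-1)) (lm 1 - lp 1), Γinv m ∈ Set.Icc (-1:ℝ) 1)
    (hGinvRight : ∀ m ∈ Set.Icc (lm (-1) - lp (-1)) (lm 1 - lp 1), lm (Γinv m) - lp (Γinv m) = m)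
    (m : ℝ) (g : ℝ) (hg : g ∈ Set.Icc (-1:ℝ) 1) :
    Psi lp lm Γinv m ≤ lp g + lm g + |m - (lm g - lp g)| := by
  have hmem1 : (-1:ℝ) ∈ Set.Icc (-1:ℝ) 1 := by constructor <;> norm_num
  have hmem2 : (1:ℝ) ∈ Set.Icc (-1:ℝ) 1 := by constructor <;> norm_num
  have habs1 : -(m - (lm g - lp g)) ≤ |m - (lm g - lp g)| := neg_le_abs _
  have habs2 : m - (lm g - lp g) ≤ |m - (lm g - lp g)| := le_abs_self _
  unfold Psi
  split_ifs with h1 h2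
  · -- m ≤ Γ(-1)
    have hlm : lm (-1) ≤ lm g := hlmm hmem1 hg hg.1
    linarith
  · -- Γ(-1) < m < Γ(1)
    have hmmem : m ∈ Set.Icc (lm (-1) - lp (-1)) (lm 1 - lp 1) :=
      ⟨(not_le.mp h1).le, le_of_lt h2⟩
    have hgs := hGinvMem m hmmem
    have hval := hGinvRight m hmmem
    rcases le_total g (Γinv m) with hle | hle
    · have hlp : lp (Γinv m) ≤ lp g := hlpm hg hgs hle
      linarith
    · have hlm : lm (Γinv m) ≤ lm g := hlmm hgs hg hle
      linarith
  · -- m ≥ Γ(1)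
    have hlp : lp 1 ≤ lp g := hlpm hg hmem2 hg.2
    linarith

lemma psi_attain (lp lm Γinv : ℝ → ℝ)
    (hGinvMem : ∀ m ∈ Set.Icc (lm (-1) - lp (-1)) (lm 1 - lp 1), Γinv m ∈ Set.Icc (-1:ℝ) 1)
    (hGinvRight : ∀ m ∈ Set.Icc (lm (-1) - lp (-1)) (lm 1 - lp 1), lm (Γinv m) - lp (Γinv m) = m)
    (m : ℝ) :
    ∃ g ∈ Set.Icc (-1:ℝ) 1, lp g + lm g + |m - (lm g - lp g)| = Psi lp lm Γinv m := by
  unfold Psi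
  split_ifs with h1 h2
  · refine ⟨-1, by constructor <;> norm_num, ?_⟩
    rw [abs_of_nonpos (by linarith)]
    ring
  · have hmmem : m ∈ Set.Icc (lm (-1) - lp (-1)) (lm 1 - lp 1) :=
      ⟨(not_le.mp h1).le, le_of_lt h2⟩
    refine ⟨Γinv m, hGinvMem m hmmem, ?_⟩
    rw [hGinvRight m hmmem]
    simp
  · refine ⟨1, by constructor <;> norm_num, ?_⟩
    rw [abs_of_nonneg (by push_neg at h2; linarith)]
    ring

lemma loss_decomp (lp lm : ℝ → ℝ) (n : ℕ) (hn : 0 < n) (z g : Fin n → ℝ) :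
    lossV lp lm n z g = (1/(2*(n:ℝ))) * (∑ j, (lp (g j) + lm (g j)))
      + ∑ j, ((lp (g j) - lm (g j))/(2*(n:ℝ))) * z j := by
  have hn' : ((n:ℝ)) ≠ 0 := Nat.cast_ne_zero.mpr hn.ne'
  unfold lossV
  rw [Finset.mul_sum, Finset.mul_sum, ← Finset.sum_add_distrib]
  refine Finset.sum_congr rfl fun j _ => ?_
  field_simp
  ring


lemma weak_dual (p n : ℕ) (hn : 0 < n) (F : Fin p → Fin n → ℝ)
    (lp lm Γinv : ℝ → ℝ) (eps : Fin p → ℝ)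
    (σ : Fin p → ℝ) (hσ : ∀ i, 0 ≤ σ i)
    (g : Fin n → ℝ)
    (hgeq : ∀ j, lp (g j) + lm (g j) +
        |(∑ i, σ i * (lm (F i j) - lp (F i j))) - (lm (g j) - lp (g j))|
      = Psi lp lm Γinv (∑ i, σ i * (lm (F i j) - lp (F i j))))
    (z : Fin n → ℝ) (hzbox : ∀ j, z j ∈ Set.Icc (-1:ℝ) 1)
    (hzfeas : ∀ i, lossV lp lm n z (F i) ≤ eps i) :
    lossV lp lm n z g ≤ (1/2) * (-(∑ i, ((1/(n:ℝ)) * (∑ j, (lp (F i j) + lm (F i j))) - 2 * eps i) * σ i)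
      + (1/(n:ℝ)) * ∑ j, Psi lp lm Γinv (∑ i, σ i * (lm (F i j) - lp (F i j)))) := by
  have hn' : (0:ℝ) < n := by exact_mod_cast hn
  -- step 1
  have step1 : lossV lp lm n z g ≤ lossV lp lm n z g
      + ∑ i, σ i * (eps i - lossV lp lm n z (F i)) := by
    have : 0 ≤ ∑ i, σ i * (eps i - lossV lp lm n z (F i)) :=
      Finset.sum_nonneg fun i _ => mul_nonneg (hσ i) (by linarith [hzfeas i])
    linarith
  -- per-coordinate key inequality
  have key : ∀ j, ((1 + z j)/2 * lp (g j) + (1 - z j)/2 * lm (g j))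
      - (∑ i, σ i * ((1 + z j)/2 * lp (F i j) + (1 - z j)/2 * lm (F i j)))
      ≤ (1/2) * Psi lp lm Γinv (∑ i, σ i * (lm (F i j) - lp (F i j)))
        - (1/2) * ∑ i, σ i * (lp (F i j) + lm (F i j)) := by
    intro j
    obtain ⟨hz1, hz2⟩ := hzbox j
    have habs : z j * ((∑ i, σ i * (lm (F i j) - lp (F i j))) - (lm (g j) - lp (g j)))
        ≤ |(∑ i, σ i * (lm (F i j) - lp (F i j))) - (lm (g j) - lp (g j))| := by
      calc z j * _ ≤ |z j * ((∑ i, σ i * (lm (F i j) - lp (F i j))) - (lm (g j) - lp (g j)))| :=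
            le_abs_self _
        _ = |z j| * |(∑ i, σ i * (lm (F i j) - lp (F i j))) - (lm (g j) - lp (g j))| := abs_mul _ _
        _ ≤ 1 * |(∑ i, σ i * (lm (F i j) - lp (F i j))) - (lm (g j) - lp (g j))| := by
            apply mul_le_mul_of_nonneg_right _ (abs_nonneg _)
            rw [abs_le]; exact ⟨hz1, hz2⟩
        _ = _ := one_mul _
    have hsum1 : ∑ i, σ i * ((1 + z j)/2 * lp (F i j) + (1 - z j)/2 * lm (F i j))
        = (1/2) * (∑ i, σ i * (lp (F i j) + lm (F i j)))
          - (z j / 2) * (∑ i, σ i * (lm (F i j) - lp (F i j))) := by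
      rw [Finset.mul_sum, Finset.mul_sum, ← Finset.sum_sub_distrib]
      exact Finset.sum_congr rfl fun i _ => by ring
    rw [hsum1, ← hgeq j]
    nlinarith [habs]
  -- assembling sums
  have hswap : ∑ i, σ i * lossV lp lm n z (F i)
      = (1/(n:ℝ)) * ∑ j, ∑ i, σ i * ((1 + z j)/2 * lp (F i j) + (1 - z j)/2 * lm (F i j)) := by
    unfold lossV
    simp only [Finset.mul_sum]
    rw [Finset.sum_comm]
    exact Finset.sum_congr rfl fun j _ => Finset.sum_congr rfl fun i _ => by ring
  have hsub : ∑ i, σ i * (eps i - lossV lp lm n z (F i))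
      = (∑ i, eps i * σ i) - ∑ i, σ i * lossV lp lm n z (F i) := by
    rw [← Finset.sum_sub_distrib]
    exact Finset.sum_congr rfl fun i _ => by ring
  have hRHS1 : ∑ i, ((1/(n:ℝ)) * (∑ j, (lp (F i j) + lm (F i j))) - 2 * eps i) * σ i
      = (1/(n:ℝ)) * (∑ j, ∑ i, σ i * (lp (F i j) + lm (F i j))) - 2 * ∑ i, eps i * σ i := by
    calc ∑ i, ((1/(n:ℝ)) * (∑ j, (lp (F i j) + lm (F i j))) - 2 * eps i) * σ i
        = ∑ i, ((∑ j, (1/(n:ℝ)) * (σ i * (lp (F i j) + lm (F i j)))) - 2 * (eps i * σ i)) := by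
          refine Finset.sum_congr rfl fun i _ => ?_
          rw [sub_mul, Finset.mul_sum, Finset.sum_mul]
          congr 1
          · exact Finset.sum_congr rfl fun j _ => by ring
          · ring
      _ = (∑ i, ∑ j, (1/(n:ℝ)) * (σ i * (lp (F i j) + lm (F i j)))) - ∑ i, 2 * (eps i * σ i) :=
          Finset.sum_sub_distrib _ _
      _ = (1/(n:ℝ)) * (∑ j, ∑ i, σ i * (lp (F i j) + lm (F i j))) - 2 * ∑ i, eps i * σ i := by
          rw [Finset.sum_comm, Finset.mul_sum, Finset.mul_sum]
          congr 1
          · exact Finset.sum_congr rfl fun j _ => by rw [Finset.mul_sum]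
  have hkeysum : ∑ j, (((1 + z j)/2 * lp (g j) + (1 - z j)/2 * lm (g j))
        - (∑ i, σ i * ((1 + z j)/2 * lp (F i j) + (1 - z j)/2 * lm (F i j))))
      ≤ ∑ j, ((1/2) * Psi lp lm Γinv (∑ i, σ i * (lm (F i j) - lp (F i j)))
        - (1/2) * ∑ i, σ i * (lp (F i j) + lm (F i j))) :=
    Finset.sum_le_sum fun j _ => key j
  have hmul := mul_le_mul_of_nonneg_left hkeysum (by positivity : (0:ℝ) ≤ 1/(n:ℝ))
  have hexp1 : (1/(n:ℝ)) * ∑ j, (((1 + z j)/2 * lp (g j) + (1 - z j)/2 * lm (g j))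
        - (∑ i, σ i * ((1 + z j)/2 * lp (F i j) + (1 - z j)/2 * lm (F i j))))
      = lossV lp lm n z g
        - (1/(n:ℝ)) * ∑ j, ∑ i, σ i * ((1 + z j)/2 * lp (F i j) + (1 - z j)/2 * lm (F i j)) := by
    rw [Finset.sum_sub_distrib, mul_sub]
    rfl
  have hexp2 : (1/(n:ℝ)) * ∑ j, ((1/2) * Psi lp lm Γinv (∑ i, σ i * (lm (F i j) - lp (F i j)))
        - (1/2) * ∑ i, σ i * (lp (F i j) + lm (F i j)))
      = (1/2) * ((1/(n:ℝ)) * ∑ j, Psi lp lm Γinv (∑ i, σ i * (lm (F i j) - lp (F i j))))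
        - (1/2) * ((1/(n:ℝ)) * (∑ j, ∑ i, σ i * (lp (F i j) + lm (F i j)))) := by
    rw [Finset.sum_sub_distrib, mul_sub, ← Finset.mul_sum, ← Finset.mul_sum]
    ring
  rw [hexp1, hexp2] at hmul
  rw [hswap] at hsub
  linarith [step1, hsub, hRHS1, hmul]


lemma strong_dual (p n : ℕ) (hn : 0 < n) (F : Fin p → Fin n → ℝ)
    (hF : ∀ i j, F i j ∈ Set.Icc (-1:ℝ) 1)
    (lp lm Γinv : ℝ → ℝ) (eps : Fin p → ℝ)
    (hlpm : AntitoneOn lp (Set.Icc (-1) 1))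
    (hlmm : MonotoneOn lm (Set.Icc (-1) 1))
    (hGinvMem : ∀ m ∈ Set.Icc (lm (-1) - lp (-1)) (lm 1 - lp 1), Γinv m ∈ Set.Icc (-1:ℝ) 1)
    (hGinvRight : ∀ m ∈ Set.Icc (lm (-1) - lp (-1)) (lm 1 - lp 1), lm (Γinv m) - lp (Γinv m) = m)
    (g : Fin n → ℝ) (hgbox : ∀ j, g j ∈ Set.Icc (-1:ℝ) 1)
    (zs : Fin n → ℝ) (hzsbox : ∀ j, zs j ∈ Set.Icc (-1:ℝ) 1)
    (hzsfeas : ∀ i, lossV lp lm n zs (F i) ≤ eps i)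
    (v : ℝ)
    (hv : ∀ z : Fin n → ℝ, (∀ j, z j ∈ Set.Icc (-1:ℝ) 1) →
      (∀ i, lossV lp lm n z (F i) ≤ eps i) → lossV lp lm n z g ≤ v)
    (η : ℝ) (hη : 0 < η) :
    ∃ σ : Fin p → ℝ, (∀ i, 0 ≤ σ i) ∧
      (-(∑ i, ((1/(n:ℝ)) * (∑ j, (lp (F i j) + lm (F i j))) - 2 * eps i) * σ i)
        + (1/(n:ℝ)) * ∑ j, Psi lp lm Γinv (∑ i, σ i * (lm (F i j) - lp (F i j))))
      ≤ 2*v + 2*η := by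
  classical
  have hn' : (0:ℝ) < n := by exact_mod_cast hn
  set a : Fin p → Fin n → ℝ := fun i j => (lm (F i j) - lp (F i j))/(2*(n:ℝ)) with ha
  set b : Fin p → ℝ := fun i => (1/(2*(n:ℝ))) * (∑ j, (lp (F i j) + lm (F i j))) - eps i with hb
  set c : Fin n → ℝ := fun j => (lp (g j) - lm (g j))/(2*(n:ℝ)) with hc
  -- constraint equivalence
  have hneg : ∀ (i : Fin p) (z : Fin n → ℝ),
      ∑ j, ((lp (F i j) - lm (F i j))/(2*(n:ℝ))) * z j = -∑ j, a i j * z j := by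
    intro i z
    rw [← Finset.sum_neg_distrib]
    exact Finset.sum_congr rfl fun j _ => by rw [ha]; ring
  have hconstr : ∀ (z : Fin n → ℝ) (i : Fin p),
      lossV lp lm n z (F i) ≤ eps i ↔ b i ≤ ∑ j, a i j * z j := by
    intro z i
    rw [loss_decomp lp lm n hn z (F i), hneg i z, hb]
    constructor <;> intro h <;> simp only at h ⊢ <;> linarith
  -- upper bound hypothesis for the LP
  have hub : ∀ z : Fin n → ℝ, (∀ j, z j ∈ Set.Icc (-1:ℝ) 1) → (∀ i, b i ≤ ∑ j, a i j * z j) →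
      ∑ j, c j * z j ≤ v - (1/(2*(n:ℝ))) * (∑ j, (lp (g j) + lm (g j))) := by
    intro z hzbox hzfeas
    have := hv z hzbox (fun i => (hconstr z i).mpr (hzfeas i))
    rw [loss_decomp lp lm n hn z g] at this
    rw [hc]
    linarith
  obtain ⟨σ, hσnn, hσ⟩ := lp_dual p n a b c
    (v - (1/(2*(n:ℝ))) * (∑ j, (lp (g j) + lm (g j)))) zs hzsbox
    (fun i => (hconstr zs i).mp (hzsfeas i)) hub η hη
  refine ⟨σ, hσnn, ?_⟩
  -- evaluate at the sign point
  set zhat : Fin n → ℝ := fun j => if 0 ≤ c j + ∑ i, σ i * a i j then (1:ℝ) else -1 with hzhat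
  have hzhatbox : ∀ j, zhat j ∈ Set.Icc (-1:ℝ) 1 := by
    intro j
    rw [hzhat]
    dsimp only
    split_ifs <;> constructor <;> norm_num
  have hkey := hσ zhat hzhatbox
  -- rewrite LHS of hkey as sum of absolute values minus σ·b
  have hswap : ∑ i, σ i * ((∑ j, a i j * zhat j) - b i)
      = (∑ j, (∑ i, σ i * a i j) * zhat j) - ∑ i, σ i * b i := by
    have h1 : ∑ i, σ i * ((∑ j, a i j * zhat j) - b i)
        = (∑ i, ∑ j, σ i * a i j * zhat j) - ∑ i, σ i * b i := by
      rw [← Finset.sum_sub_distrib]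
      refine Finset.sum_congr rfl fun i _ => ?_
      rw [mul_sub, Finset.mul_sum]
      congr 1
      exact Finset.sum_congr rfl fun j _ => by ring
    rw [h1, Finset.sum_comm]
    congr 1
    exact Finset.sum_congr rfl fun j _ => by rw [Finset.sum_mul]
  have habsval : ∀ j, (c j + ∑ i, σ i * a i j) * zhat j = |c j + ∑ i, σ i * a i j| := by
    intro j
    rw [hzhat]
    dsimp only
    split_ifs with h
    · rw [mul_one, abs_of_nonneg h]
    · push_neg at h
      rw [abs_of_neg h]
      ring
  have hkey2 : (∑ j, |c j + ∑ i, σ i * a i j|) - ∑ i, σ i * b i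
      ≤ v - (1/(2*(n:ℝ))) * (∑ j, (lp (g j) + lm (g j))) + η := by
    have hcomb : ∑ j, c j * zhat j + (∑ j, (∑ i, σ i * a i j) * zhat j)
        = ∑ j, |c j + ∑ i, σ i * a i j| := by
      rw [← Finset.sum_add_distrib]
      refine Finset.sum_congr rfl fun j _ => ?_
      rw [← habsval j]
      ring
    rw [hswap] at hkey
    linarith
  -- identify the absolute values
  have habs : ∀ j, |c j + ∑ i, σ i * a i j|
      = (1/(2*(n:ℝ))) * |(∑ i, σ i * (lm (F i j) - lp (F i j))) - (lm (g j) - lp (g j))| := by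
    intro j
    have hsum : ∑ i, σ i * a i j = (∑ i, σ i * (lm (F i j) - lp (F i j))) / (2*(n:ℝ)) := by
      rw [Finset.sum_div]
      exact Finset.sum_congr rfl fun i _ => by rw [ha]; ring
    have : c j + ∑ i, σ i * a i j
        = ((∑ i, σ i * (lm (F i j) - lp (F i j))) - (lm (g j) - lp (g j))) / (2*(n:ℝ)) := by
      rw [hsum, hc]
      dsimp only
      ring
    rw [this, abs_div, abs_of_pos (by positivity : (0:ℝ) < 2*(n:ℝ))]
    ring
  -- bound Psi
  have hpsi : ∀ j, Psi lp lm Γinv (∑ i, σ i * (lm (F i j) - lp (F i j)))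
      ≤ lp (g j) + lm (g j)
        + |(∑ i, σ i * (lm (F i j) - lp (F i j))) - (lm (g j) - lp (g j))| :=
    fun j => psi_le lp lm Γinv hlpm hlmm hGinvMem hGinvRight _ (g j) (hgbox j)
  have hpsisum : (1/(n:ℝ)) * ∑ j, Psi lp lm Γinv (∑ i, σ i * (lm (F i j) - lp (F i j)))
      ≤ (1/(n:ℝ)) * ∑ j, (lp (g j) + lm (g j))
        + 2 * ∑ j, |c j + ∑ i, σ i * a i j| := by
    have h1 : ∑ j, Psi lp lm Γinv (∑ i, σ i * (lm (F i j) - lp (F i j)))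
        ≤ ∑ j, (lp (g j) + lm (g j)
          + |(∑ i, σ i * (lm (F i j) - lp (F i j))) - (lm (g j) - lp (g j))|) :=
      Finset.sum_le_sum fun j _ => hpsi j
    have h2 := mul_le_mul_of_nonneg_left h1 (by positivity : (0:ℝ) ≤ 1/(n:ℝ))
    have h3 : (1/(n:ℝ)) * ∑ j, (lp (g j) + lm (g j)
          + |(∑ i, σ i * (lm (F i j) - lp (F i j))) - (lm (g j) - lp (g j))|)
        = (1/(n:ℝ)) * ∑ j, (lp (g j) + lm (g j))
          + 2 * ∑ j, |c j + ∑ i, σ i * a i j| := by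
      rw [Finset.sum_add_distrib, mul_add]
      congr 1
      calc (1/(n:ℝ)) * ∑ j, |(∑ i, σ i * (lm (F i j) - lp (F i j))) - (lm (g j) - lp (g j))|
          = 2 * ∑ j, (1/(2*(n:ℝ)))
              * |(∑ i, σ i * (lm (F i j) - lp (F i j))) - (lm (g j) - lp (g j))| := by
            rw [Finset.mul_sum, Finset.mul_sum]
            exact Finset.sum_congr rfl fun j _ => by ring
        _ = 2 * ∑ j, |c j + ∑ i, σ i * a i j| := by
            congr 1
            exact Finset.sum_congr rfl fun j _ => (habs j).symm
    linarith [h2, h3.symm.le, h3.le]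
  have hbsum : ∑ i, ((1/(n:ℝ)) * (∑ j, (lp (F i j) + lm (F i j))) - 2 * eps i) * σ i
      = 2 * ∑ i, σ i * b i := by
    rw [Finset.mul_sum]
    refine Finset.sum_congr rfl fun i _ => ?_
    rw [hb]
    dsimp only
    ring
  have hKg : (1/(n:ℝ)) * ∑ j, (lp (g j) + lm (g j))
      = 2*((1/(2*(n:ℝ))) * ∑ j, (lp (g j) + lm (g j))) := by ring
  rw [hbsum]
  linarith [hkey2, hpsisum, hKg]


theorem stmt_13 (p n : ℕ) (hp : 0 < p) (hn : 0 < n)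
    (F : Fin p → Fin n → ℝ) (hF : ∀ i j, F i j ∈ Set.Icc (-1:ℝ) 1)
    (lp lm lp' lm' lp'' lm'' Γinv : ℝ → ℝ)
    (hlpc : ContinuousOn lp (Set.Icc (-1) 1))
    (hlmc : ContinuousOn lm (Set.Icc (-1) 1))
    (hlpd : ∀ x ∈ Set.Ioo (-1:ℝ) 1, HasDerivAt lp (lp' x) x)
    (hlmd : ∀ x ∈ Set.Ioo (-1:ℝ) 1, HasDerivAt lm (lm' x) x)
    (hlpd2 : ∀ x ∈ Set.Ioo (-1:ℝ) 1, HasDerivAt lp' (lp'' x) x)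
    (hlmd2 : ∀ x ∈ Set.Ioo (-1:ℝ) 1, HasDerivAt lm' (lm'' x) x)
    (hlpm : AntitoneOn lp (Set.Icc (-1) 1))
    (hlmm : MonotoneOn lm (Set.Icc (-1) 1))
    (hslope : ∀ x ∈ Set.Ioo (-1:ℝ) 1, 0 < lm' x - lp' x)
    (hGinvMem : ∀ m ∈ Set.Icc (lm (-1) - lp (-1)) (lm 1 - lp 1), Γinv m ∈ Set.Icc (-1:ℝ) 1)
    (hGinvRight : ∀ m ∈ Set.Icc (lm (-1) - lp (-1)) (lm 1 - lp 1), lm (Γinv m) - lp (Γinv m) = m)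
    (hGinvLeft : ∀ g ∈ Set.Icc (-1:ℝ) 1, Γinv (lm g - lp g) = g)
    (eps : Fin p → ℝ)
    (hZ : {z : Fin n → ℝ | (∀ j, z j ∈ Set.Icc (-1:ℝ) 1) ∧
      ∀ i, lossV lp lm n z (F i) ≤ eps i}.Nonempty) :
    sInf {v : ℝ | ∃ g : Fin n → ℝ, (∀ j, g j ∈ Set.Icc (-1:ℝ) 1) ∧
        v = sSup {w : ℝ | ∃ z ∈ {z : Fin n → ℝ | (∀ j, z j ∈ Set.Icc (-1:ℝ) 1) ∧
          ∀ i, lossV lp lm n z (F i) ≤ eps i}, w = lossV lp lm n z g}} =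
      (1 / 2) * sInf {v : ℝ | ∃ σ : Fin p → ℝ, (∀ i, 0 ≤ σ i) ∧
        v = -(∑ i, ((1 / (n : ℝ)) * (∑ j, (lp (F i j) + lm (F i j))) - 2 * eps i) * σ i) +
          (1 / (n : ℝ)) * ∑ j, Psi lp lm Γinv (∑ i, σ i * (lm (F i j) - lp (F i j)))} := by
  classical
  have hn' : (0:ℝ) < n := by exact_mod_cast hn
  obtain ⟨zs, hzsbox, hzsfeas⟩ := hZ
  -- a uniform bound on lp, lm over the box
  obtain ⟨Mp, hMp⟩ := isCompact_Icc.exists_bound_of_continuousOn hlpc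
  obtain ⟨Mm, hMm⟩ := isCompact_Icc.exists_bound_of_continuousOn hlmc
  set M : ℝ := |Mp| + |Mm| + 1 with hM
  have hMb : ∀ x ∈ Set.Icc (-1:ℝ) 1, |lp x| ≤ M ∧ |lm x| ≤ M := by
    intro x hx
    have h1 := hMp x hx
    have h2 := hMm x hx
    rw [Real.norm_eq_abs] at h1 h2
    constructor
    · have := le_abs_self Mp
      have := abs_nonneg Mm
      rw [hM]; linarith
    · have := le_abs_self Mm
      have := abs_nonneg Mp
      rw [hM]; linarith
  have hlossbd : ∀ z g : Fin n → ℝ, (∀ j, z j ∈ Set.Icc (-1:ℝ) 1) →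
      (∀ j, g j ∈ Set.Icc (-1:ℝ) 1) → |lossV lp lm n z g| ≤ M := by
    intro z g hzb hgb
    have hterm : ∀ j, |(1 + z j)/2 * lp (g j) + (1 - z j)/2 * lm (g j)| ≤ M := by
      intro j
      obtain ⟨hz1, hz2⟩ := hzb j
      obtain ⟨hp1, hm1⟩ := hMb (g j) (hgb j)
      have e1 : |(1 + z j)/2 * lp (g j)| = (1 + z j)/2 * |lp (g j)| := by
        rw [abs_mul, abs_of_nonneg (by linarith : (0:ℝ) ≤ (1 + z j)/2)]
      have e2 : |(1 - z j)/2 * lm (g j)| = (1 - z j)/2 * |lm (g j)| := by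
        rw [abs_mul, abs_of_nonneg (by linarith : (0:ℝ) ≤ (1 - z j)/2)]
      calc |(1 + z j)/2 * lp (g j) + (1 - z j)/2 * lm (g j)|
          ≤ |(1 + z j)/2 * lp (g j)| + |(1 - z j)/2 * lm (g j)| := abs_add_le _ _
        _ = (1 + z j)/2 * |lp (g j)| + (1 - z j)/2 * |lm (g j)| := by rw [e1, e2]
        _ ≤ (1 + z j)/2 * M + (1 - z j)/2 * M := add_le_add
            (mul_le_mul_of_nonneg_left hp1 (by linarith))
            (mul_le_mul_of_nonneg_left hm1 (by linarith))
        _ = M := by ring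
    have hsum : |∑ j, ((1 + z j)/2 * lp (g j) + (1 - z j)/2 * lm (g j))| ≤ (n:ℝ) * M := by
      calc |∑ j, ((1 + z j)/2 * lp (g j) + (1 - z j)/2 * lm (g j))|
          ≤ ∑ j, |(1 + z j)/2 * lp (g j) + (1 - z j)/2 * lm (g j)| :=
            Finset.abs_sum_le_sum_abs _ _
        _ ≤ ∑ _j : Fin n, M := Finset.sum_le_sum fun j _ => hterm j
        _ = (n:ℝ) * M := by rw [Finset.sum_const, Finset.card_univ, Fintype.card_fin,
              nsmul_eq_mul]
    unfold lossV
    rw [abs_mul, abs_of_nonneg (by positivity : (0:ℝ) ≤ 1/(n:ℝ))]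
    calc (1/(n:ℝ)) * |∑ j, ((1 + z j)/2 * lp (g j) + (1 - z j)/2 * lm (g j))|
        ≤ (1/(n:ℝ)) * ((n:ℝ) * M) := mul_le_mul_of_nonneg_left hsum (by positivity)
      _ = M := by field_simp
  -- nonemptiness / boundedness of the inner sup sets
  have hWne : ∀ g : Fin n → ℝ, {w : ℝ | ∃ z ∈ {z : Fin n → ℝ | (∀ j, z j ∈ Set.Icc (-1:ℝ) 1) ∧
      ∀ i, lossV lp lm n z (F i) ≤ eps i}, w = lossV lp lm n z g}.Nonempty :=
    fun g => ⟨lossV lp lm n zs g, zs, ⟨hzsbox, hzsfeas⟩, rfl⟩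
  have hWbdd : ∀ g : Fin n → ℝ, (∀ j, g j ∈ Set.Icc (-1:ℝ) 1) →
      BddAbove {w : ℝ | ∃ z ∈ {z : Fin n → ℝ | (∀ j, z j ∈ Set.Icc (-1:ℝ) 1) ∧
      ∀ i, lossV lp lm n z (F i) ≤ eps i}, w = lossV lp lm n z g} := by
    intro g hgb
    refine ⟨M, ?_⟩
    rintro w ⟨z, ⟨hzb, hzf⟩, rfl⟩
    exact (abs_le.mp (hlossbd z g hzb hgb)).2
  have hWlb : ∀ g : Fin n → ℝ, (∀ j, g j ∈ Set.Icc (-1:ℝ) 1) →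
      -M ≤ sSup {w : ℝ | ∃ z ∈ {z : Fin n → ℝ | (∀ j, z j ∈ Set.Icc (-1:ℝ) 1) ∧
      ∀ i, lossV lp lm n z (F i) ≤ eps i}, w = lossV lp lm n z g} := by
    intro g hgb
    have h1 : -M ≤ lossV lp lm n zs g := (abs_le.mp (hlossbd zs g hzsbox hgb)).1
    exact h1.trans (le_csSup (hWbdd g hgb) ⟨zs, ⟨hzsbox, hzsfeas⟩, rfl⟩)
  have hbox0 : ∀ j : Fin n, (0:ℝ) ∈ Set.Icc (-1:ℝ) 1 := fun j => by constructor <;> norm_num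
  have hLne : {v : ℝ | ∃ g : Fin n → ℝ, (∀ j, g j ∈ Set.Icc (-1:ℝ) 1) ∧
      v = sSup {w : ℝ | ∃ z ∈ {z : Fin n → ℝ | (∀ j, z j ∈ Set.Icc (-1:ℝ) 1) ∧
        ∀ i, lossV lp lm n z (F i) ≤ eps i}, w = lossV lp lm n z g}}.Nonempty :=
    ⟨_, (fun _ => 0), hbox0, rfl⟩
  have hLbdd : BddBelow {v : ℝ | ∃ g : Fin n → ℝ, (∀ j, g j ∈ Set.Icc (-1:ℝ) 1) ∧
      v = sSup {w : ℝ | ∃ z ∈ {z : Fin n → ℝ | (∀ j, z j ∈ Set.Icc (-1:ℝ) 1) ∧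
        ∀ i, lossV lp lm n z (F i) ≤ eps i}, w = lossV lp lm n z g}} := by
    refine ⟨-M, ?_⟩
    rintro v ⟨g, hgb, rfl⟩
    exact hWlb g hgb
  have hDne : {v : ℝ | ∃ σ : Fin p → ℝ, (∀ i, 0 ≤ σ i) ∧
      v = -(∑ i, ((1 / (n : ℝ)) * (∑ j, (lp (F i j) + lm (F i j))) - 2 * eps i) * σ i) +
        (1 / (n : ℝ)) * ∑ j, Psi lp lm Γinv (∑ i, σ i * (lm (F i j) - lp (F i j)))}.Nonempty :=
    ⟨_, (fun _ => 0), fun i => le_rfl, rfl⟩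
  -- weak duality, with the optimal prediction attached
  have hweak : ∀ σ : Fin p → ℝ, (∀ i, 0 ≤ σ i) → ∃ g : Fin n → ℝ,
      (∀ j, g j ∈ Set.Icc (-1:ℝ) 1) ∧
      sSup {w : ℝ | ∃ z ∈ {z : Fin n → ℝ | (∀ j, z j ∈ Set.Icc (-1:ℝ) 1) ∧
        ∀ i, lossV lp lm n z (F i) ≤ eps i}, w = lossV lp lm n z g}
      ≤ (1/2) * (-(∑ i, ((1 / (n : ℝ)) * (∑ j, (lp (F i j) + lm (F i j))) - 2 * eps i) * σ i) +
        (1 / (n : ℝ)) * ∑ j, Psi lp lm Γinv (∑ i, σ i * (lm (F i j) - lp (F i j)))) := by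
    intro σ hσ
    choose g hgbox hgeq using fun j => psi_attain lp lm Γinv hGinvMem hGinvRight
      (∑ i, σ i * (lm (F i j) - lp (F i j)))
    refine ⟨g, hgbox, csSup_le (hWne g) ?_⟩
    rintro w ⟨z, ⟨hzb, hzf⟩, rfl⟩
    exact weak_dual p n hn F lp lm Γinv eps σ hσ g hgeq z hzb hzf
  have hDbdd : BddBelow {v : ℝ | ∃ σ : Fin p → ℝ, (∀ i, 0 ≤ σ i) ∧
      v = -(∑ i, ((1 / (n : ℝ)) * (∑ j, (lp (F i j) + lm (F i j))) - 2 * eps i) * σ i) +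
        (1 / (n : ℝ)) * ∑ j, Psi lp lm Γinv (∑ i, σ i * (lm (F i j) - lp (F i j)))} := by
    refine ⟨-(2*M), ?_⟩
    rintro d ⟨σ, hσ, rfl⟩
    obtain ⟨g, hgb, hle⟩ := hweak σ hσ
    have := hWlb g hgb
    linarith
  apply le_antisymm
  · -- weak duality direction
    have h1 : 2 * sInf {v : ℝ | ∃ g : Fin n → ℝ, (∀ j, g j ∈ Set.Icc (-1:ℝ) 1) ∧
        v = sSup {w : ℝ | ∃ z ∈ {z : Fin n → ℝ | (∀ j, z j ∈ Set.Icc (-1:ℝ) 1) ∧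
          ∀ i, lossV lp lm n z (F i) ≤ eps i}, w = lossV lp lm n z g}}
        ≤ sInf {v : ℝ | ∃ σ : Fin p → ℝ, (∀ i, 0 ≤ σ i) ∧
        v = -(∑ i, ((1 / (n : ℝ)) * (∑ j, (lp (F i j) + lm (F i j))) - 2 * eps i) * σ i) +
          (1 / (n : ℝ)) * ∑ j, Psi lp lm Γinv (∑ i, σ i * (lm (F i j) - lp (F i j)))} := by
      refine le_csInf hDne ?_
      rintro d ⟨σ, hσ, rfl⟩
      obtain ⟨g, hgb, hle⟩ := hweak σ hσ
      have h2 : sInf {v : ℝ | ∃ g : Fin n → ℝ, (∀ j, g j ∈ Set.Icc (-1:ℝ) 1) ∧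
          v = sSup {w : ℝ | ∃ z ∈ {z : Fin n → ℝ | (∀ j, z j ∈ Set.Icc (-1:ℝ) 1) ∧
            ∀ i, lossV lp lm n z (F i) ≤ eps i}, w = lossV lp lm n z g}}
          ≤ sSup {w : ℝ | ∃ z ∈ {z : Fin n → ℝ | (∀ j, z j ∈ Set.Icc (-1:ℝ) 1) ∧
            ∀ i, lossV lp lm n z (F i) ≤ eps i}, w = lossV lp lm n z g} :=
        csInf_le hLbdd ⟨g, hgb, rfl⟩
      linarith
    linarith
  · -- strong duality direction
    refine le_csInf hLne ?_
    rintro v ⟨g, hgb, rfl⟩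
    have hv : ∀ z : Fin n → ℝ, (∀ j, z j ∈ Set.Icc (-1:ℝ) 1) →
        (∀ i, lossV lp lm n z (F i) ≤ eps i) → lossV lp lm n z g
        ≤ sSup {w : ℝ | ∃ z ∈ {z : Fin n → ℝ | (∀ j, z j ∈ Set.Icc (-1:ℝ) 1) ∧
          ∀ i, lossV lp lm n z (F i) ≤ eps i}, w = lossV lp lm n z g} :=
      fun z hzb hzf => le_csSup (hWbdd g hgb) ⟨z, ⟨hzb, hzf⟩, rfl⟩
    have hkey : sInf {v : ℝ | ∃ σ : Fin p → ℝ, (∀ i, 0 ≤ σ i) ∧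
        v = -(∑ i, ((1 / (n : ℝ)) * (∑ j, (lp (F i j) + lm (F i j))) - 2 * eps i) * σ i) +
          (1 / (n : ℝ)) * ∑ j, Psi lp lm Γinv (∑ i, σ i * (lm (F i j) - lp (F i j)))}
        ≤ 2 * sSup {w : ℝ | ∃ z ∈ {z : Fin n → ℝ | (∀ j, z j ∈ Set.Icc (-1:ℝ) 1) ∧
          ∀ i, lossV lp lm n z (F i) ≤ eps i}, w = lossV lp lm n z g} := by
      refine le_of_forall_pos_le_add ?_
      intro ε hε
      obtain ⟨σ, hσnn, hd⟩ := strong_dual p n hn F hF lp lm Γinv eps hlpm hlmm hGinvMem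
        hGinvRight g hgb zs hzsbox hzsfeas _ hv (ε/4) (by positivity)
      have := csInf_le hDbdd (⟨σ, hσnn, rfl⟩ : _ ∈ {v : ℝ | ∃ σ : Fin p → ℝ, (∀ i, 0 ≤ σ i) ∧
        v = -(∑ i, ((1 / (n : ℝ)) * (∑ j, (lp (F i j) + lm (F i j))) - 2 * eps i) * σ i) +
          (1 / (n : ℝ)) * ∑ j, Psi lp lm Γinv (∑ i, σ i * (lm (F i j) - lp (F i j)))})
      linarith
    linarith
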